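/- Let j ≥ 2 and let b, a_0, ..., a_{j−1} be nonzero complex numbers with a_n = b · ∏_{k=1}^{j} a_{n−k} for n ≥ j. If |b| · ∏_{k=0}^{j−1} |a_k|^{1 − φ_j^{−k−1}} < 1, where φ_j is the j-nacci constant, then a_n → 0. -/

import Mathlib

set_option maxHeartbeats 2000000 in
theorem stmt_18 (j : ℕ) (hj : 2 ≤ j) (b : ℂ) (hb : b ≠ 0)
    (a : ℕ → ℂ) (ha : ∀ k < j, a k ≠ 0)
    (hrec : ∀ n ≥ j, a n = b * ∏ k ∈ Finset.Icc 1 j, a (n - k))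
    (φ : ℝ) (hφpos : 0 < φ)
    (hφ : ∑ k ∈ Finset.Icc 1 j, φ ^ (-(k : ℤ)) = 1)
    (hcond : ‖b‖ *
      ∏ k ∈ Finset.range j, ‖a k‖ ^ ((1 : ℝ) - φ⁻¹ ^ (k + 1)) < 1) :
    Filter.Tendsto a Filter.atTop (nhds 0) := by
  have hj0 : 0 < j := by omega
  set ψ := φ⁻¹ with hψdef
  have hψpos : 0 < ψ := inv_pos.mpr hφpos
  have hφψ : φ * ψ = 1 := mul_inv_cancel₀ (ne_of_gt hφpos)
  have hconv : ∀ f : ℕ → ℝ, ∑ k ∈ Finset.Icc 1 j, f k = ∑ i ∈ Finset.range j, f (1 + i) := by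
    intro f
    rw [← Finset.Ico_add_one_right_eq_Icc, Finset.sum_Ico_eq_sum_range]
    norm_num
  have hsum : ∑ k ∈ Finset.Icc 1 j, ψ ^ k = 1 := by
    rw [← hφ]
    exact Finset.sum_congr rfl fun k _ => by rw [zpow_neg, zpow_natCast, inv_pow]
  have hφ1 : 1 < φ := by
    by_contra h
    push_neg at h
    have hψ1 : 1 ≤ ψ := (one_le_inv₀ hφpos).mpr h
    have h2 : (j : ℝ) ≤ ∑ k ∈ Finset.Icc 1 j, ψ ^ k := by
      calc (j : ℝ) = ∑ _k ∈ Finset.Icc 1 j, (1 : ℝ) := by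
            rw [Finset.sum_const, Nat.card_Icc]; simp
        _ ≤ _ := Finset.sum_le_sum fun k _ => one_le_pow₀ hψ1
    rw [hsum] at h2
    have : (2 : ℝ) ≤ (j : ℝ) := by exact_mod_cast hj
    linarith
  have hψ1 : ψ < 1 := by rw [hψdef]; exact inv_lt_one_of_one_lt₀ hφ1
  have hφ1' : (0 : ℝ) < φ - 1 := by linarith
  -- all terms nonzero
  have haa : ∀ n, a n ≠ 0 := by
    intro n
    induction n using Nat.strong_induction_on with
    | _ n ih =>
      by_cases h : n < j
      · exact ha n h
      · rw [hrec n (le_of_not_gt h)]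
        refine mul_ne_zero hb (Finset.prod_ne_zero_iff.mpr fun k hk => ?_)
        simp only [Finset.mem_Icc] at hk
        exact ih _ (by omega)
  have hrpos : ∀ n, 0 < ‖a n‖ := fun n => norm_pos_iff.mpr (haa n)
  set β := Real.log ‖b‖ with hβdef
  set L : ℕ → ℝ := fun n => Real.log ‖a n‖ with hLdef
  have hLrec : ∀ n, j ≤ n → L n = β + ∑ k ∈ Finset.Icc 1 j, L (n - k) := by
    intro n hn
    have h1 : ‖a n‖ =
        ‖b‖ * ∏ k ∈ Finset.Icc 1 j, ‖a (n - k)‖ := by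
      rw [hrec n hn, norm_mul, norm_prod]
    simp only [hLdef]
    rw [h1, Real.log_mul (norm_ne_zero_iff.mpr hb)
        (Finset.prod_ne_zero_iff.mpr fun k _ => ne_of_gt (hrpos _)),
      Real.log_prod fun k _ => ne_of_gt (hrpos _)]
  have hjr : ((j : ℝ) - 1) ≠ 0 := by
    have : (2 : ℝ) ≤ (j : ℝ) := by exact_mod_cast hj
    linarith
  set γ := β / ((j : ℝ) - 1) with hγdef
  have hβγ : β = ((j : ℝ) - 1) * γ := by rw [hγdef]; field_simp
  set u : ℕ → ℝ := fun n => L n + γ with hudef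
  have hu : ∀ n, j ≤ n → u n = ∑ k ∈ Finset.Icc 1 j, u (n - k) := by
    intro n hn
    have h1 : ∑ k ∈ Finset.Icc 1 j, u (n - k)
        = (∑ k ∈ Finset.Icc 1 j, L (n - k)) + (j : ℝ) * γ := by
      simp only [hudef]
      rw [Finset.sum_add_distrib, Finset.sum_const, Nat.card_Icc]
      simp [nsmul_eq_mul]
    rw [h1]
    simp only [hudef]
    have h2 := hLrec n hn
    rw [h2]
    linarith [hβγ]
  set v : ℕ → ℝ := fun n => u n * ψ ^ n with hvdef
  have hvrec : ∀ n, j ≤ n → v n = ∑ k ∈ Finset.Icc 1 j, ψ ^ k * v (n - k) := by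
    intro n hn
    have h1 : ∀ k ∈ Finset.Icc 1 j, ψ ^ k * v (n - k) = u (n - k) * ψ ^ n := by
      intro k hk
      simp only [Finset.mem_Icc] at hk
      simp only [hvdef]
      have : ψ ^ k * ψ ^ (n - k) = ψ ^ n := by
        rw [← pow_add]; congr 1; omega
      calc ψ ^ k * (u (n - k) * ψ ^ (n - k)) = u (n - k) * (ψ ^ k * ψ ^ (n - k)) := by ring
        _ = u (n - k) * ψ ^ n := by rw [this]
    rw [Finset.sum_congr rfl h1, ← Finset.sum_mul, ← hu n hn]
  -- the Lyapunov coefficients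
  set c : ℕ → ℝ := fun k => (1 - ψ ^ (j + 1 - k)) / (φ - 1) with hcdef
  have htel : ∀ m : ℕ, (φ - 1) * ∑ s ∈ Finset.Icc 1 m, ψ ^ s = 1 - ψ ^ m := by
    intro m
    induction m with
    | zero => simp
    | succ m ihm =>
      rw [Finset.sum_Icc_succ_top (by omega)]
      have h : φ * ψ ^ (m + 1) = ψ ^ m := by
        rw [pow_succ, mul_comm (ψ ^ m) ψ, ← mul_assoc, hφψ, one_mul]
      linear_combination ihm + h
  have hφδ : φ - 1 = 1 - ψ ^ j := by
    have := htel j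
    rw [hsum, mul_one] at this
    linarith
  have hc1 : c 1 = 1 := by
    simp only [hcdef]
    have e : j + 1 - 1 = j := by omega
    rw [e, ← hφδ, div_self (ne_of_gt hφ1')]
  have hcpos : ∀ k, 1 ≤ k → k ≤ j → 0 < c k := by
    intro k h1 h2
    have : ψ ^ (j + 1 - k) < 1 := pow_lt_one₀ hψpos.le hψ1 (by omega)
    exact div_pos (by linarith) hφ1'
  have hcrec : ∀ k, 1 ≤ k → k < j → φ * c k = 1 + c (k + 1) := by
    intro k h1 h2
    simp only [hcdef]
    have e1 : j + 1 - k = (j - k) + 1 := by omega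
    have e2 : j + 1 - (k + 1) = j - k := by omega
    rw [e1, e2]
    have h : φ * ψ ^ (j - k + 1) = ψ ^ (j - k) := by
      rw [pow_succ, mul_comm (ψ ^ (j - k)) ψ, ← mul_assoc, hφψ, one_mul]
    have hAB : φ * (1 - ψ ^ (j - k + 1)) = (φ - 1) + (1 - ψ ^ (j - k)) := by
      linear_combination -h
    calc φ * ((1 - ψ ^ (j - k + 1)) / (φ - 1))
        = (φ * (1 - ψ ^ (j - k + 1))) / (φ - 1) := by ring
      _ = ((φ - 1) + (1 - ψ ^ (j - k))) / (φ - 1) := by rw [hAB]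
      _ = 1 + (1 - ψ ^ (j - k)) / (φ - 1) := by
          rw [add_div, div_self (ne_of_gt hφ1')]
  have hcj : φ * c j = 1 := by
    simp only [hcdef]
    have e : j + 1 - j = 1 := by omega
    rw [e, pow_one]
    have hAB : φ * (1 - ψ) = φ - 1 := by linear_combination -hφψ
    calc φ * ((1 - ψ) / (φ - 1)) = (φ * (1 - ψ)) / (φ - 1) := by ring
      _ = (φ - 1) / (φ - 1) := by rw [hAB]
      _ = 1 := div_self (ne_of_gt hφ1')
  set W : ℕ → ℝ := fun n => ∑ k ∈ Finset.Icc 1 j, c k * u (n - k) with hWdef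
  have hWstep : ∀ n, j ≤ n → W (n + 1) = φ * W n := by
    intro n hn
    obtain ⟨d, hd⟩ : ∃ d, j = d + 1 := ⟨j - 1, by omega⟩
    have hA : W (n + 1) = (∑ i ∈ Finset.range d, c (i + 2) * u (n - (i + 1))) + u n := by
      calc W (n + 1) = ∑ i ∈ Finset.range j, c (1 + i) * u (n + 1 - (1 + i)) := by
            simp only [hWdef]; exact hconv _
        _ = ∑ i ∈ Finset.range (d + 1), c (1 + i) * u (n - i) := by
            rw [hd]
            refine Finset.sum_congr rfl fun i _ => ?_
            have e : n + 1 - (1 + i) = n - i := by omega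
            rw [e]
        _ = (∑ i ∈ Finset.range d, c (1 + (i + 1)) * u (n - (i + 1))) + c (1 + 0) * u (n - 0) :=
            Finset.sum_range_succ' _ d
        _ = (∑ i ∈ Finset.range d, c (i + 2) * u (n - (i + 1))) + u n := by
            rw [show c (1 + 0) = 1 from hc1, one_mul, Nat.sub_zero]
            congr 1
            refine Finset.sum_congr rfl fun i _ => ?_
            have e : 1 + (i + 1) = i + 2 := by omega
            rw [e]
    have hC : u n = (∑ i ∈ Finset.range d, u (n - (i + 1))) + u (n - j) := by
      calc u n = ∑ k ∈ Finset.Icc 1 j, u (n - k) := hu n hn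
        _ = ∑ i ∈ Finset.range j, u (n - (1 + i)) := hconv _
        _ = ∑ i ∈ Finset.range (d + 1), u (n - (i + 1)) := by
            rw [hd]
            refine Finset.sum_congr rfl fun i _ => ?_
            have e : n - (1 + i) = n - (i + 1) := by omega
            rw [e]
        _ = (∑ i ∈ Finset.range d, u (n - (i + 1))) + u (n - (d + 1)) := Finset.sum_range_succ _ d
        _ = (∑ i ∈ Finset.range d, u (n - (i + 1))) + u (n - j) := by rw [← hd]
    have hB : φ * W n = (∑ i ∈ Finset.range d, u (n - (i + 1)))
        + (∑ i ∈ Finset.range d, c (i + 2) * u (n - (i + 1))) + u (n - j) := by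
      calc φ * W n = ∑ k ∈ Finset.Icc 1 j, φ * (c k * u (n - k)) := by
            simp only [hWdef]; rw [Finset.mul_sum]
        _ = ∑ i ∈ Finset.range j, φ * (c (1 + i) * u (n - (1 + i))) := hconv _
        _ = ∑ i ∈ Finset.range (d + 1), φ * (c (i + 1) * u (n - (i + 1))) := by
            rw [hd]
            refine Finset.sum_congr rfl fun i _ => ?_
            have e : 1 + i = i + 1 := by omega
            rw [e]
        _ = (∑ i ∈ Finset.range d, φ * (c (i + 1) * u (n - (i + 1))))
            + φ * (c (d + 1) * u (n - (d + 1))) := Finset.sum_range_succ _ d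
        _ = (∑ i ∈ Finset.range d, (u (n - (i + 1)) + c (i + 2) * u (n - (i + 1))))
            + u (n - j) := by
            congr 1
            · refine Finset.sum_congr rfl fun i hi => ?_
              simp only [Finset.mem_range] at hi
              have hce := hcrec (i + 1) (by omega) (by omega)
              calc φ * (c (i + 1) * u (n - (i + 1))) = (φ * c (i + 1)) * u (n - (i + 1)) := by
                    ring
                _ = (1 + c (i + 2)) * u (n - (i + 1)) := by rw [hce]
                _ = u (n - (i + 1)) + c (i + 2) * u (n - (i + 1)) := by ring
            · have e : d + 1 = j := by omega
              rw [e]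
              calc φ * (c j * u (n - j)) = (φ * c j) * u (n - j) := by ring
                _ = u (n - j) := by rw [hcj, one_mul]
        _ = _ := by rw [Finset.sum_add_distrib]
    rw [hA, hB, hC]
    ring
  have hWgeo : ∀ n, j ≤ n → W n = W j * φ ^ (n - j) := by
    intro n hn
    induction n, hn using Nat.le_induction with
    | base => simp
    | succ n hn ih =>
      rw [hWstep n hn, ih]
      have e : n + 1 - j = (n - j) + 1 := by omega
      rw [e, pow_succ]
      ring
  have hinv : ∀ n, j ≤ n →
      ∑ k ∈ Finset.Icc 1 j, (c k * ψ ^ k) * v (n - k) = ψ ^ j * W j := by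
    intro n hn
    have h1 : ∀ k ∈ Finset.Icc 1 j, (c k * ψ ^ k) * v (n - k) = (c k * u (n - k)) * ψ ^ n := by
      intro k hk
      simp only [Finset.mem_Icc] at hk
      simp only [hvdef]
      have : ψ ^ k * ψ ^ (n - k) = ψ ^ n := by rw [← pow_add]; congr 1; omega
      calc (c k * ψ ^ k) * (u (n - k) * ψ ^ (n - k))
          = (c k * u (n - k)) * (ψ ^ k * ψ ^ (n - k)) := by ring
        _ = (c k * u (n - k)) * ψ ^ n := by rw [this]
    rw [Finset.sum_congr rfl h1, ← Finset.sum_mul]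
    have h2 : ∑ k ∈ Finset.Icc 1 j, c k * u (n - k) = W n := rfl
    rw [h2, hWgeo n hn]
    have h3 : φ ^ (n - j) * ψ ^ n = ψ ^ j := by
      have e : ψ ^ n = ψ ^ (n - j) * ψ ^ j := by rw [← pow_add]; congr 1; omega
      rw [e, ← mul_assoc, ← mul_pow, hφψ, one_pow, one_mul]
    linear_combination W j * h3
  -- W j < 0 from the hypothesis
  have hWj : W j < 0 := by
    have hrefl : ∑ k ∈ Finset.Icc 1 j, ψ ^ (j + 1 - k) = 1 := by
      calc ∑ k ∈ Finset.Icc 1 j, ψ ^ (j + 1 - k)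
          = ∑ i ∈ Finset.range j, ψ ^ (j + 1 - (1 + i)) := hconv _
        _ = ∑ i ∈ Finset.range j, ψ ^ (j - 1 - i + 1) := by
            refine Finset.sum_congr rfl fun i hi => ?_
            simp only [Finset.mem_range] at hi
            have e : j + 1 - (1 + i) = j - 1 - i + 1 := by omega
            rw [e]
        _ = ∑ i ∈ Finset.range j, ψ ^ (i + 1) := Finset.sum_range_reflect (fun i => ψ ^ (i + 1)) j
        _ = ∑ k ∈ Finset.Icc 1 j, ψ ^ k := by
            rw [hconv fun k => ψ ^ k]
            refine Finset.sum_congr rfl fun i _ => ?_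
            have e : 1 + i = i + 1 := by omega
            rw [e]
        _ = 1 := hsum
    have hP2 : ∑ k ∈ Finset.Icc 1 j, c k = ((j : ℝ) - 1) / (φ - 1) := by
      simp only [hcdef]
      rw [← Finset.sum_div]
      congr 1
      rw [Finset.sum_sub_distrib, hrefl, Finset.sum_const, Nat.card_Icc]
      simp
    have hP1 : ∑ k ∈ Finset.Icc 1 j, c k * L (j - k)
        = (∑ m ∈ Finset.range j, (1 - ψ ^ (m + 1)) * L m) / (φ - 1) := by
      calc ∑ k ∈ Finset.Icc 1 j, c k * L (j - k)
          = ∑ i ∈ Finset.range j, c (1 + i) * L (j - (1 + i)) := hconv _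
        _ = ∑ i ∈ Finset.range j, c (1 + (j - 1 - i)) * L (j - (1 + (j - 1 - i))) :=
            (Finset.sum_range_reflect (fun i => c (1 + i) * L (j - (1 + i))) j).symm
        _ = ∑ i ∈ Finset.range j, ((1 - ψ ^ (i + 1)) / (φ - 1)) * L i := by
            refine Finset.sum_congr rfl fun i hi => ?_
            simp only [Finset.mem_range] at hi
            have e1 : 1 + (j - 1 - i) = j - i := by omega
            rw [e1]
            have e2 : j - (j - i) = i := by omega
            rw [e2]
            simp only [hcdef]
            have e3 : j + 1 - (j - i) = i + 1 := by omega
            rw [e3]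
        _ = (∑ m ∈ Finset.range j, (1 - ψ ^ (m + 1)) * L m) / (φ - 1) := by
            rw [Finset.sum_div]
            exact Finset.sum_congr rfl fun i _ => by ring
    have hposprod : 0 < ∏ k ∈ Finset.range j, ‖a k‖ ^ ((1 : ℝ) - ψ ^ (k + 1)) :=
      Finset.prod_pos fun k _ => Real.rpow_pos_of_pos (hrpos k) _
    have h0 := Real.log_neg (mul_pos (norm_pos_iff.mpr hb) hposprod) hcond
    rw [Real.log_mul (ne_of_gt (norm_pos_iff.mpr hb)) (ne_of_gt hposprod),
      Real.log_prod fun k _ => ne_of_gt (Real.rpow_pos_of_pos (hrpos k) _)] at h0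
    rw [Finset.sum_congr rfl fun k (_ : k ∈ Finset.range j) =>
      Real.log_rpow (hrpos k) ((1 : ℝ) - ψ ^ (k + 1))] at h0
    rw [← hβdef] at h0
    have hWjval : W j = ((∑ m ∈ Finset.range j, (1 - ψ ^ (m + 1)) * L m) + β) / (φ - 1) := by
      calc W j = ∑ k ∈ Finset.Icc 1 j, (c k * L (j - k) + c k * γ) := by
            simp only [hWdef, hudef]
            exact Finset.sum_congr rfl fun k _ => by ring
        _ = (∑ k ∈ Finset.Icc 1 j, c k * L (j - k)) + (∑ k ∈ Finset.Icc 1 j, c k) * γ := by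
            rw [Finset.sum_add_distrib, ← Finset.sum_mul]
        _ = _ := by
            rw [hP1, hP2, hβγ]
            ring
    rw [hWjval]
    exact div_neg_of_neg_of_pos (by linarith) hφ1'
  -- dynamics
  set s : ℝ := ∑ k ∈ Finset.Icc 1 j, c k * ψ ^ k with hsdef
  have hne : (Finset.Icc 1 j).Nonempty := Finset.nonempty_Icc.mpr (by omega)
  have hspos : 0 < s := by
    rw [hsdef]
    apply Finset.sum_pos _ hne
    intro k hk
    simp only [Finset.mem_Icc] at hk
    exact mul_pos (hcpos k hk.1 hk.2) (pow_pos hψpos k)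
  set Ω : ℝ := (ψ ^ j * W j) / s with hΩdef
  have hΩneg : Ω < 0 :=
    div_neg_of_neg_of_pos (mul_neg_of_pos_of_neg (pow_pos hψpos j) hWj) hspos
  have hsΩ : s * Ω = ψ ^ j * W j := by
    rw [hΩdef]; field_simp
  set M : ℕ → ℝ := fun n => (Finset.Ico n (n + j)).sup'
    (Finset.nonempty_Ico.mpr (by omega)) v with hMdef
  have hub : ∀ n i, n ≤ i → v i ≤ M n := by
    intro n i
    induction i using Nat.strong_induction_on with
    | _ i ih =>
      intro hni
      by_cases h : i < n + j
      · exact Finset.le_sup' v (Finset.mem_Ico.mpr ⟨hni, h⟩)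
      · push_neg at h
        rw [hvrec i (by omega)]
        calc ∑ k ∈ Finset.Icc 1 j, ψ ^ k * v (i - k)
            ≤ ∑ k ∈ Finset.Icc 1 j, ψ ^ k * M n := by
              refine Finset.sum_le_sum fun k hk => ?_
              simp only [Finset.mem_Icc] at hk
              exact mul_le_mul_of_nonneg_left (ih (i - k) (by omega) (by omega))
                (pow_nonneg hψpos.le k)
          _ = M n := by rw [← Finset.sum_mul, hsum, one_mul]
  have hMmono : ∀ n m, n ≤ m → M m ≤ M n := by
    intro n m h
    refine Finset.sup'_le _ _ fun p hp => ?_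
    simp only [Finset.mem_Ico] at hp
    exact hub n p (by omega)
  have hsmall : ∀ n, j ≤ n → ∃ m, n ≤ m ∧ m < n + j ∧ v m ≤ Ω := by
    intro n hn
    by_contra hcon
    push_neg at hcon
    have h1 := hinv (n + j) (by omega)
    rw [← hsΩ] at h1
    have h2 : ∑ k ∈ Finset.Icc 1 j, (c k * ψ ^ k) * Ω
        < ∑ k ∈ Finset.Icc 1 j, (c k * ψ ^ k) * v (n + j - k) := by
      refine Finset.sum_lt_sum_of_nonempty hne fun k hk => ?_
      simp only [Finset.mem_Icc] at hk
      exact mul_lt_mul_of_pos_left (hcon (n + j - k) (by omega) (by omega))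
        (mul_pos (hcpos k hk.1 hk.2) (pow_pos hψpos k))
    rw [← Finset.sum_mul, h1] at h2
    rw [hsdef] at h2
    exact lt_irrefl _ h2
  have hbig : ∀ n, j ≤ n → Ω ≤ M n := by
    intro n hn
    have h1 := hinv (n + j) (by omega)
    rw [← hsΩ] at h1
    have h2 : ∑ k ∈ Finset.Icc 1 j, (c k * ψ ^ k) * v (n + j - k)
        ≤ ∑ k ∈ Finset.Icc 1 j, (c k * ψ ^ k) * M n := by
      refine Finset.sum_le_sum fun k hk => ?_
      simp only [Finset.mem_Icc] at hk
      exact mul_le_mul_of_nonneg_left (hub n (n + j - k) (by omega))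
        (le_of_lt (mul_pos (hcpos k hk.1 hk.2) (pow_pos hψpos k)))
    rw [h1, ← Finset.sum_mul, ← hsdef] at h2
    exact le_of_mul_le_mul_left h2 hspos
  set δ : ℝ := ψ ^ j with hδdef
  have hδpos : 0 < δ := pow_pos hψpos j
  have hδ1 : δ ≤ 1 := pow_le_one₀ hψpos.le hψ1.le
  have hcontr : ∀ n, j ≤ n → M (n + 2 * j) - Ω ≤ (1 - δ ^ 2) * (M n - Ω) := by
    intro n hn
    obtain ⟨m, hm1, hm2, hvm⟩ := hsmall n hn
    have hMΩ := hbig n hn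
    have hsplit : ∀ f : ℕ → ℝ,
        ∑ k ∈ Finset.Icc 1 j, f k = ∑ k ∈ Finset.Icc 1 (j - 1), f k + f j := by
      intro f
      have hj' : j = (j - 1) + 1 := by omega
      conv_lhs => rw [hj']
      rw [Finset.sum_Icc_succ_top (by omega), ← hj']
    have hsum' : ∑ k ∈ Finset.Icc 1 (j - 1), ψ ^ k = 1 - δ := by
      have := hsplit fun k => ψ ^ k
      rw [hsum] at this
      rw [hδdef]
      linarith
    have h1 : v (m + j) ≤ M n - δ * (M n - Ω) := by
      rw [hvrec (m + j) (by omega), hsplit fun k => ψ ^ k * v (m + j - k)]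
      have hA : ∑ k ∈ Finset.Icc 1 (j - 1), ψ ^ k * v (m + j - k)
          ≤ ∑ k ∈ Finset.Icc 1 (j - 1), ψ ^ k * M n := by
        refine Finset.sum_le_sum fun k hk => ?_
        simp only [Finset.mem_Icc] at hk
        exact mul_le_mul_of_nonneg_left (hub n (m + j - k) (by omega)) (pow_nonneg hψpos.le k)
      have hA' : ∑ k ∈ Finset.Icc 1 (j - 1), ψ ^ k * M n = (1 - δ) * M n := by
        rw [← Finset.sum_mul, hsum']
      have hB : ψ ^ j * v (m + j - j) ≤ δ * Ω := by
        have e : m + j - j = m := by omega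
        rw [e, ← hδdef]
        exact mul_le_mul_of_nonneg_left hvm hδpos.le
      have := add_le_add (le_trans hA (le_of_eq hA')) hB
      nlinarith
    have h2 : ∀ p, m + j ≤ p → p < m + 2 * j → v p ≤ M n - δ ^ 2 * (M n - Ω) := by
      intro p hp1 hp2
      rcases eq_or_lt_of_le hp1 with he | hlt
      · rw [← he]
        have hδ2 : δ ^ 2 ≤ δ := by nlinarith
        have := mul_le_mul_of_nonneg_right hδ2 (sub_nonneg.mpr hMΩ)
        linarith
      · have hmem : p - (m + j) ∈ Finset.Icc 1 j := Finset.mem_Icc.mpr ⟨by omega, by omega⟩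
        set k₀ := p - (m + j) with hk₀
        rw [hvrec p (by omega), ← Finset.sum_erase_add _ _ hmem]
        have hA : ∑ k ∈ (Finset.Icc 1 j).erase k₀, ψ ^ k * v (p - k)
            ≤ ∑ k ∈ (Finset.Icc 1 j).erase k₀, ψ ^ k * M n := by
          refine Finset.sum_le_sum fun k hk => ?_
          have hk' := Finset.mem_of_mem_erase hk
          simp only [Finset.mem_Icc] at hk'
          exact mul_le_mul_of_nonneg_left (hub n (p - k) (by omega)) (pow_nonneg hψpos.le k)
        have hsum'' : ∑ k ∈ (Finset.Icc 1 j).erase k₀, ψ ^ k = 1 - ψ ^ k₀ := by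
          have h := Finset.sum_erase_add (Finset.Icc 1 j) (fun k => ψ ^ k) hmem
          rw [hsum] at h
          linarith
        have hA' : ∑ k ∈ (Finset.Icc 1 j).erase k₀, ψ ^ k * M n = (1 - ψ ^ k₀) * M n := by
          rw [← Finset.sum_mul, hsum'']
        have hB : ψ ^ k₀ * v (p - k₀) ≤ ψ ^ k₀ * (M n - δ * (M n - Ω)) := by
          have e : p - k₀ = m + j := by omega
          rw [e]
          exact mul_le_mul_of_nonneg_left h1 (pow_nonneg hψpos.le k₀)
        have hδk : δ ≤ ψ ^ k₀ := by
          rw [hδdef]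
          exact pow_le_pow_of_le_one hψpos.le hψ1.le (by omega)
        have hk₀1 : ψ ^ k₀ ≤ 1 := pow_le_one₀ hψpos.le hψ1.le
        have hcomb := add_le_add (le_trans hA (le_of_eq hA')) hB
        nlinarith [mul_le_mul_of_nonneg_right hδk (by nlinarith : (0:ℝ) ≤ δ * (M n - Ω))]
    have h3 : M (m + j) ≤ M n - δ ^ 2 * (M n - Ω) := by
      refine Finset.sup'_le _ _ fun p hp => ?_
      simp only [Finset.mem_Ico] at hp
      exact h2 p hp.1 (by omega)
    have h4 : M (n + 2 * j) ≤ M (m + j) := hMmono _ _ (by omega)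
    nlinarith
  have hE : ∀ k : ℕ, M (j + 2 * j * k) - Ω ≤ (1 - δ ^ 2) ^ k * (M j - Ω) := by
    intro k
    induction k with
    | zero => simp
    | succ k ihk =>
      have hstep := hcontr (j + 2 * j * k) (by omega)
      have he : j + 2 * j * (k + 1) = (j + 2 * j * k) + 2 * j := by ring
      rw [he]
      have h1δ : (0 : ℝ) ≤ 1 - δ ^ 2 := by nlinarith
      calc M ((j + 2 * j * k) + 2 * j) - Ω ≤ (1 - δ ^ 2) * (M (j + 2 * j * k) - Ω) := hstep
        _ ≤ (1 - δ ^ 2) * ((1 - δ ^ 2) ^ k * (M j - Ω)) := by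
            exact mul_le_mul_of_nonneg_left ihk h1δ
        _ = (1 - δ ^ 2) ^ (k + 1) * (M j - Ω) := by rw [pow_succ]; ring
  have hfin : ∃ N, ∀ i, N ≤ i → v i ≤ Ω / 2 := by
    have h1δ : (0 : ℝ) ≤ 1 - δ ^ 2 := by nlinarith
    have h2δ : (1 : ℝ) - δ ^ 2 < 1 := by nlinarith
    have ht : Filter.Tendsto (fun k : ℕ => (1 - δ ^ 2) ^ k * (M j - Ω)) Filter.atTop (nhds 0) := by
      simpa using (tendsto_pow_atTop_nhds_zero_of_lt_one h1δ h2δ).mul_const (M j - Ω)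
    have hev := ht.eventually (gt_mem_nhds (by linarith : (0:ℝ) < -Ω / 2))
    obtain ⟨k, hk⟩ := hev.exists
    refine ⟨j + 2 * j * k, fun i hi => ?_⟩
    have h1 := hE k
    have h2 := hub (j + 2 * j * k) i hi
    linarith
  -- conclusion
  obtain ⟨N, hN⟩ := hfin
  rw [tendsto_zero_iff_norm_tendsto_zero]
  have hB : Filter.Tendsto (fun i : ℕ => Real.exp ((Ω / 2) * φ ^ i - γ))
      Filter.atTop (nhds 0) := by
    apply Real.tendsto_exp_atBot.comp
    have hφt : Filter.Tendsto (fun i : ℕ => φ ^ i) Filter.atTop Filter.atTop :=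
      tendsto_pow_atTop_atTop_of_one_lt hφ1
    have hmul : Filter.Tendsto (fun i : ℕ => (Ω / 2) * φ ^ i) Filter.atTop Filter.atBot :=
      Filter.Tendsto.const_mul_atTop_of_neg (by linarith) hφt
    simpa [sub_eq_add_neg] using Filter.tendsto_atBot_add_const_right Filter.atTop (-γ) hmul
  apply squeeze_zero' (Filter.Eventually.of_forall fun i => norm_nonneg _) _ hB
  filter_upwards [Filter.eventually_ge_atTop N] with i hi
  have h1 : v i ≤ Ω / 2 := hN i hi
  have h2 : u i ≤ (Ω / 2) * φ ^ i := by
    have hui : u i = v i * φ ^ i := by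
      simp only [hvdef]
      rw [mul_assoc, ← mul_pow, mul_comm ψ φ, hφψ, one_pow, mul_one]
    rw [hui]
    exact mul_le_mul_of_nonneg_right h1 (pow_nonneg hφpos.le i)
  have h3 : ‖a i‖ = Real.exp (L i) := by
    rw [← Real.exp_log (hrpos i)]
  rw [h3]
  apply Real.exp_le_exp.mpr
  have h4 : L i = u i - γ := by simp only [hudef]; ring
  linarith
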